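/- Let a and b be positive integers with a ≤ b, and let C > 0 be a real number. Then 0 < ∑_{κ=a}^{b} ln(1 + C/κ) ≤ ln(1 + C/a) + b·ln(1 + C/b) − a·ln(1 + C/a) + C·ln((b + C)/(a + C)). -/

import Mathlib

/-- For positive integers `a ≤ b` and real `C > 0`,
`0 < ∑_{κ=a}^{b} ln(1 + C/κ)` and this sum is at most
`ln(1 + C/a) + b·ln(1 + C/b) − a·ln(1 + C/a) + C·ln((b + C)/(a + C))`. -/
theorem sum_log_one_add_div_bounds
    (a b : ℕ) (ha : 0 < a) (hab : a ≤ b) (C : ℝ) (hC : 0 < C) :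
    0 < ∑ κ ∈ Finset.Icc a b, Real.log (1 + C / (κ : ℝ)) ∧
    ∑ κ ∈ Finset.Icc a b, Real.log (1 + C / (κ : ℝ)) ≤
      Real.log (1 + C / (a : ℝ)) + (b : ℝ) * Real.log (1 + C / (b : ℝ))
        - (a : ℝ) * Real.log (1 + C / (a : ℝ))
        + C * Real.log (((b : ℝ) + C) / ((a : ℝ) + C)) := by
  have ha' : (0:ℝ) < a := by exact_mod_cast ha
  have hb' : (0:ℝ) < b := lt_of_lt_of_le ha' (by exact_mod_cast hab)
  set f : ℝ → ℝ := fun x => Real.log (1 + C / x) with hf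
  -- positivity of each term
  have hpos : ∀ κ ∈ Finset.Icc a b, 0 < Real.log (1 + C / (κ : ℝ)) := by
    intro κ hκ
    have hκ1 : (0:ℝ) < κ := by
      have := (Finset.mem_Icc.1 hκ).1
      exact_mod_cast lt_of_lt_of_le ha this
    have : (1:ℝ) < 1 + C / κ := by
      have : 0 < C / (κ:ℝ) := div_pos hC hκ1
      linarith
    exact Real.log_pos this
  have hne : (Finset.Icc a b).Nonempty := ⟨a, Finset.mem_Icc.2 ⟨le_refl a, hab⟩⟩
  constructor
  · exact Finset.sum_pos hpos hne
  -- antitone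
  have hanti : AntitoneOn f (Set.Icc (a:ℝ) (b:ℝ)) := by
    intro x hx y hy hxy
    have hx0 : 0 < x := lt_of_lt_of_le ha' hx.1
    have hy0 : 0 < y := lt_of_lt_of_le ha' hy.1
    have h1 : 1 + C / y ≤ 1 + C / x := by gcongr
    have h2 : 0 < 1 + C / y := by positivity
    exact Real.log_le_log h2 h1
  -- sum = f a + shifted sum
  have hsplit : ∑ κ ∈ Finset.Icc a b, Real.log (1 + C / (κ : ℝ))
      = f a + ∑ i ∈ Finset.Ico a b, f ((i + 1 : ℕ) : ℝ) := by
    rw [← Finset.Ico_add_one_right_eq_Icc, Finset.sum_Ico_eq_sum_range, Finset.sum_Ico_eq_sum_range]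
    have hn : b + 1 - a = (b - a) + 1 := by omega
    rw [hn, Finset.sum_range_succ', add_comm]
    simp [hf, Nat.add_assoc]
  have hsum_le : ∑ i ∈ Finset.Ico a b, f ((i + 1 : ℕ) : ℝ) ≤ ∫ x in (a:ℝ)..(b:ℝ), f x :=
    AntitoneOn.sum_le_integral_Ico hab hanti
  -- the integral equals g := log(x+C) - log x on [a,b]
  set g : ℝ → ℝ := fun x => Real.log (x + C) - Real.log x with hg
  have hfg : ∀ x ∈ Set.Icc (a:ℝ) (b:ℝ), f x = g x := by
    intro x hx
    have hx0 : 0 < x := lt_of_lt_of_le ha' hx.1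
    have : 1 + C / x = (x + C) / x := by field_simp
    rw [hf, hg]
    simp only
    rw [this, Real.log_div (ne_of_gt (by positivity)) hx0.ne']
  have hicongr : (∫ x in (a:ℝ)..(b:ℝ), f x) = ∫ x in (a:ℝ)..(b:ℝ), g x := by
    apply intervalIntegral.integral_congr
    intro x hx
    rw [Set.uIcc_of_le (by exact_mod_cast hab)] at hx
    exact hfg x hx
  -- antiderivative
  set F : ℝ → ℝ := fun x => x * (Real.log (x + C) - Real.log x) + C * Real.log (x + C) with hF
  have hderiv : ∀ x ∈ Set.uIcc (a:ℝ) (b:ℝ), HasDerivAt F (g x) x := by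
    intro x hx
    rw [Set.uIcc_of_le (by exact_mod_cast hab)] at hx
    have hx0 : 0 < x := lt_of_lt_of_le ha' hx.1
    have hxC : 0 < x + C := by positivity
    have h1 : HasDerivAt (fun x : ℝ => Real.log (x + C)) (1 / (x + C)) x := by
      simpa using ((hasDerivAt_id x).add_const C).log hxC.ne'
    have h2 : HasDerivAt Real.log (1 / x) x := by
      simpa [one_div] using Real.hasDerivAt_log hx0.ne'
    have h3 : HasDerivAt (fun x : ℝ => x * (Real.log (x + C) - Real.log x))
        (1 * (Real.log (x + C) - Real.log x) + x * (1 / (x + C) - 1 / x)) x :=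
      (hasDerivAt_id x).mul (h1.sub h2)
    have h4 := h3.add (h1.const_mul C)
    convert h4 using 1
    · rfl
    · rfl
    · rfl
    rw [hg]
    simp only
    field_simp
    ring
  have hgcont : ContinuousOn g (Set.uIcc (a:ℝ) (b:ℝ)) := by
    rw [Set.uIcc_of_le (by exact_mod_cast hab)]
    apply ContinuousOn.sub
    · apply ContinuousOn.log (by fun_prop)
      intro x hx
      have : 0 < x := lt_of_lt_of_le ha' hx.1
      positivity
    · apply ContinuousOn.log (by fun_prop)
      intro x hx
      exact (lt_of_lt_of_le ha' hx.1).ne'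
  have hint : (∫ x in (a:ℝ)..(b:ℝ), g x) = F b - F a :=
    intervalIntegral.integral_eq_sub_of_hasDerivAt hderiv
      (hgcont.intervalIntegrable)
  -- put together
  have key : ∑ κ ∈ Finset.Icc a b, Real.log (1 + C / (κ : ℝ)) ≤ f a + (F b - F a) := by
    rw [hsplit]
    have := hsum_le
    rw [hicongr, hint] at this
    linarith
  refine le_trans key (le_of_eq ?_)
  have e1 : Real.log (1 + C / (a:ℝ)) = Real.log ((a:ℝ) + C) - Real.log a := by
    have : 1 + C / (a:ℝ) = ((a:ℝ) + C) / a := by field_simp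
    rw [this, Real.log_div (ne_of_gt (by positivity)) ha'.ne']
  have e2 : Real.log (1 + C / (b:ℝ)) = Real.log ((b:ℝ) + C) - Real.log b := by
    have : 1 + C / (b:ℝ) = ((b:ℝ) + C) / b := by field_simp
    rw [this, Real.log_div (ne_of_gt (by positivity)) hb'.ne']
  have e3 : Real.log (((b:ℝ) + C) / ((a:ℝ) + C)) = Real.log ((b:ℝ) + C) - Real.log ((a:ℝ) + C) :=
    Real.log_div (ne_of_gt (by positivity : (0:ℝ) < (b:ℝ)+C)) (ne_of_gt (by positivity : (0:ℝ) < (a:ℝ)+C))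
  rw [hf, hF, e1, e2, e3]
  simp only
  rw [e1]
  ring
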